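/- For all n ≥ 1, the ratio of Hankel determinants H_n/G_n for the moment sequence b_j = 2^j(2j-1)!! equals 2^n · n! / (2n+1)!!. -/
import Mathlib

private def P : ℕ → ℕ → ℕ
  | _, 0 => 1
  | s, m+1 => (s + 2*m) * P s m

private lemma P_zero (s : ℕ) : P s 0 = 1 := rfl
private lemma P_succ (s m : ℕ) : P s (m+1) = (s + 2*m) * P s m := rfl

private lemma P_pos (s m : ℕ) (hs : 0 < s) : 0 < P s m := by
  induction m with
  | zero => simp [P_zero]
  | succ m ih => rw [P_succ]; exact Nat.mul_pos (by omega) ih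

private lemma P_succ_left (s m : ℕ) : P s (m+1) = s * P (s+2) m := by
  induction m generalizing s with
  | zero => simp [P_succ, P_zero]
  | succ m ih =>
    rw [P_succ s (m+1), ih s, P_succ (s+2) m]
    ring

private lemma P_add (s a b : ℕ) : P s (a+b) = P s a * P (s + 2*a) b := by
  induction b with
  | zero => simp [P_zero]
  | succ b ih =>
    rw [show a + (b+1) = (a+b)+1 from rfl, P_succ, ih, P_succ (s+2*a) b]
    ring

private lemma key (i : ℕ) : ∀ s j : ℕ, ∑ k ∈ Finset.range (j+1),
    Nat.choose i k * Nat.descFactorial j k * 2^k * P (s+2*k) (j-k) = P (s+2*i) j := by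
  induction i with
  | zero =>
    intro s j
    rw [Finset.sum_eq_single 0]
    · simp [P_zero]
    · intro b _ hb
      rcases Nat.exists_eq_add_of_lt (Nat.pos_of_ne_zero hb) with ⟨c, hc⟩
      simp [hc, Nat.choose_eq_zero_of_lt (by omega : (0:ℕ) < c + 0 + 1)]
    · intro h; simp at h
  | succ i ih =>
    intro s j
    rw [Finset.sum_range_succ']
    have hsplit : ∀ k, Nat.choose (i+1) (k+1) * Nat.descFactorial j (k+1) * 2^(k+1) *
        P (s+2*(k+1)) (j-(k+1))
        = Nat.choose i (k+1) * Nat.descFactorial j (k+1) * 2^(k+1) * P (s+2*(k+1)) (j-(k+1))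
          + Nat.choose i k * Nat.descFactorial j (k+1) * 2^(k+1) * P (s+2*(k+1)) (j-(k+1)) := by
      intro k
      rw [Nat.choose_succ_succ']
      ring
    simp only [hsplit]
    rw [Finset.sum_add_distrib]
    have h1 : (∑ k ∈ Finset.range j,
        Nat.choose i (k+1) * Nat.descFactorial j (k+1) * 2^(k+1) * P (s+2*(k+1)) (j-(k+1)))
        + Nat.choose (i+1) 0 * Nat.descFactorial j 0 * 2^0 * P (s+2*0) (j-0)
        = P (s+2*i) j := by
      rw [show Nat.choose (i+1) 0 = Nat.choose i 0 by simp, ← ih s j,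
        Finset.sum_range_succ']
    rw [add_right_comm, h1]
    cases j with
    | zero =>
      simp [P_zero]
    | succ j =>
      have h2 : (∑ k ∈ Finset.range (j+1),
          Nat.choose i k * Nat.descFactorial (j+1) (k+1) * 2^(k+1) * P (s+2*(k+1)) ((j+1)-(k+1)))
          = 2 * (j+1) * P (s+2+2*i) j := by
        rw [← ih (s+2) j, Finset.mul_sum]
        refine Finset.sum_congr rfl fun k _ => ?_
        rw [Nat.succ_descFactorial_succ]
        have : s + 2*(k+1) = s + 2 + 2*k := by ring
        rw [this, Nat.succ_sub_succ]
        ring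
      rw [h2]
      have e1 : P (s+2*i) (j+1) = (s+2*i) * P (s+2*i+2) j := P_succ_left _ _
      rw [e1, show s+2+2*i = s+2*i+2 by ring,
        show s + 2*(i+1) = (s+2*i)+2 by ring, P_succ ((s+2*i)+2) j]
      ring

private lemma entry (s i j N : ℕ) (hjN : j < N) :
    ∑ k ∈ Finset.range N,
      (Nat.choose i k * 2^(i-k) * P (s+2*k) (i-k)) * ((8^k * Nat.factorial k * P s k) *
        (Nat.choose j k * 2^(j-k) * P (s+2*k) (j-k))) = 2^(i+j) * P s (i+j) := by
  have hterm : ∀ k,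
      (Nat.choose i k * 2^(i-k) * P (s+2*k) (i-k)) * ((8^k * Nat.factorial k * P s k) *
        (Nat.choose j k * 2^(j-k) * P (s+2*k) (j-k)))
      = 2^(i+j) * P s i * (Nat.choose i k * Nat.descFactorial j k * 2^k * P (s+2*k) (j-k)) := by
    intro k
    rcases le_or_gt k i with hki | hki
    · rcases le_or_gt k j with hkj | hkj
      · have hp : (2:ℕ)^(i+j) * 2^k = 2^(i-k) * 8^k * 2^(j-k) := by
          rw [show (8:ℕ)^k = 2^(3*k) by rw [pow_mul]; norm_num,
            ← pow_add, ← pow_add, ← pow_add]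
          congr 1
          omega
        have hP : P s k * P (s+2*k) (i-k) = P s i := by
          rw [← P_add s k (i-k), Nat.add_sub_cancel' hki]
        have hd : Nat.descFactorial j k = Nat.factorial k * Nat.choose j k :=
          Nat.descFactorial_eq_factorial_mul_choose j k
        trans (Nat.choose i k * Nat.choose j k * Nat.factorial k * (2^(i+j) * 2^k) *
          (P s k * P (s+2*k) (i-k)) * P (s+2*k) (j-k))
        · rw [hp]; ring
        · rw [hP, hd]; ring
      · have : Nat.choose j k = 0 := Nat.choose_eq_zero_of_lt hkj
        have h2 : Nat.descFactorial j k = 0 := by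
          rw [Nat.descFactorial_eq_factorial_mul_choose, this, mul_zero]
        rw [this, h2]; ring
    · have : Nat.choose i k = 0 := Nat.choose_eq_zero_of_lt hki
      rw [this]; ring
  simp only [hterm]
  rw [← Finset.mul_sum]
  have hext : ∑ k ∈ Finset.range N,
      (Nat.choose i k * Nat.descFactorial j k * 2^k * P (s+2*k) (j-k))
      = ∑ k ∈ Finset.range (j+1),
      (Nat.choose i k * Nat.descFactorial j k * 2^k * P (s+2*k) (j-k)) := by
    refine (Finset.sum_subset (by intro x hx; simp at hx ⊢; omega) ?_).symm
    intro k _ hk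
    simp only [Finset.mem_range, not_lt] at hk
    have : Nat.descFactorial j k = 0 := by
      rw [Nat.descFactorial_eq_zero_iff_lt]; omega
    rw [this]; ring
  rw [hext, key i s j, P_add s i j, mul_assoc]

open Matrix in
private lemma detM (s m : ℕ) :
    Matrix.det (Matrix.of fun i j : Fin m => ((2 ^ (i.1 + j.1) * P s (i.1 + j.1) : ℕ) : ℝ)) =
      ∏ k ∈ Finset.range m, ((8 ^ k * Nat.factorial k * P s k : ℕ) : ℝ) := by
  set L : Matrix (Fin m) (Fin m) ℝ :=
    Matrix.of fun i k : Fin m =>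
      ((Nat.choose i.1 k.1 * 2 ^ (i.1 - k.1) * P (s + 2*k.1) (i.1 - k.1) : ℕ) : ℝ) with hL
  set d : Fin m → ℝ := fun k => ((8 ^ k.1 * Nat.factorial k.1 * P s k.1 : ℕ) : ℝ) with hd
  have hM : (Matrix.of fun i j : Fin m => ((2 ^ (i.1 + j.1) * P s (i.1 + j.1) : ℕ) : ℝ))
      = L * Matrix.diagonal d * Lᵀ := by
    ext i j
    rw [Matrix.mul_apply]
    simp only [Matrix.mul_diagonal, Matrix.transpose_apply, hL, hd, Matrix.of_apply]
    calc ((2 ^ (i.1 + j.1) * P s (i.1 + j.1) : ℕ) : ℝ)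
        = ((∑ k ∈ Finset.range m,
            (Nat.choose i.1 k * 2^(i.1-k) * P (s+2*k) (i.1-k)) *
              ((8^k * Nat.factorial k * P s k) *
                (Nat.choose j.1 k * 2^(j.1-k) * P (s+2*k) (j.1-k))) : ℕ) : ℝ) := by
          rw [entry s i.1 j.1 m j.2]
      _ = ∑ k ∈ Finset.range m,
            ((Nat.choose i.1 k * 2^(i.1-k) * P (s+2*k) (i.1-k) : ℕ) : ℝ) *
              ((8^k * Nat.factorial k * P s k : ℕ) : ℝ) *
                ((Nat.choose j.1 k * 2^(j.1-k) * P (s+2*k) (j.1-k) : ℕ) : ℝ) := by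
          rw [Nat.cast_sum]
          exact Finset.sum_congr rfl fun k _ => by push_cast; ring
      _ = _ := by rw [← Fin.sum_univ_eq_sum_range]
  rw [hM, Matrix.det_mul, Matrix.det_mul, Matrix.det_transpose, Matrix.det_diagonal]
  have hLtri : L.det = ∏ i, L i i := by
    apply Matrix.det_of_lowerTriangular
    intro i j hij
    have hij2 : i < j := OrderDual.toDual_lt_toDual.mp hij
    have hij' : (i:ℕ) < (j:ℕ) := hij2
    simp only [hL, Matrix.of_apply]
    rw [Nat.choose_eq_zero_of_lt hij']
    simp
  have hLdiag : ∀ i : Fin m, L i i = 1 := by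
    intro i
    simp [hL, Nat.sub_self, P_zero]
  rw [hLtri]
  simp only [hLdiag, Finset.prod_const_one, one_mul, mul_one]
  exact Fin.prod_univ_eq_prod_range (fun k => ((8 ^ k * Nat.factorial k * P s k : ℕ) : ℝ)) m

private lemma P1 (m : ℕ) : P 1 (m+1) = Nat.doubleFactorial (2*m+1) := by
  induction m with
  | zero => rfl
  | succ m ih =>
    rw [P_succ, ih, show 2*(m+1)+1 = (2*m+1)+2 by ring, Nat.doubleFactorial]
    ring_nf

private lemma Pd (m : ℕ) : P 1 m = Nat.doubleFactorial (2*m-1) := by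
  cases m with
  | zero => rfl
  | succ m => rw [show 2*(m+1)-1 = 2*m+1 by omega, P1]

private lemma P15 (m : ℕ) : P 1 (m+2) = 3 * P 5 m := by
  rw [show m+2 = 2+m by ring, P_add 1 2 m]
  rfl

private lemma AB (n : ℕ) :
    (∏ k ∈ Finset.range (n+1), 8^k * Nat.factorial k * P 1 k) * P 1 (n+1)
      = 2^n * Nat.factorial n * 12^n * ∏ k ∈ Finset.range n, 8^k * Nat.factorial k * P 5 k := by
  induction n with
  | zero => rfl
  | succ n ih =>
    have h1 : ∏ k ∈ Finset.range (n+1+1), 8^k * Nat.factorial k * P 1 k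
        = (∏ k ∈ Finset.range (n+1), 8^k * Nat.factorial k * P 1 k) *
          (8^(n+1) * Nat.factorial (n+1) * P 1 (n+1)) := Finset.prod_range_succ _ _
    have h2 : ∏ k ∈ Finset.range (n+1), 8^k * Nat.factorial k * P 5 k
        = (∏ k ∈ Finset.range n, 8^k * Nat.factorial k * P 5 k) *
          (8^n * Nat.factorial n * P 5 n) := Finset.prod_range_succ _ _
    rw [h1, h2]
    calc (∏ k ∈ Finset.range (n+1), 8^k * Nat.factorial k * P 1 k) *
          (8^(n+1) * Nat.factorial (n+1) * P 1 (n+1)) * P 1 (n+1+1)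
        = ((∏ k ∈ Finset.range (n+1), 8^k * Nat.factorial k * P 1 k) * P 1 (n+1)) *
            (8^(n+1) * Nat.factorial (n+1) * (3 * P 5 n)) := by
          rw [show n+1+1 = n+2 from rfl, P15]; ring
      _ = (2^n * Nat.factorial n * 12^n *
            ∏ k ∈ Finset.range n, 8^k * Nat.factorial k * P 5 k) *
            (8^(n+1) * Nat.factorial (n+1) * (3 * P 5 n)) := by rw [ih]
      _ = _ := by rw [pow_succ 8, pow_succ 2, pow_succ 12]; ring

theorem hankel_ratio_gaussian (n : ℕ) (hn : 1 ≤ n) :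
    Matrix.det (Matrix.of fun i j : Fin (n + 1) =>
        ((2 ^ (i.1 + j.1) * Nat.doubleFactorial (2 * (i.1 + j.1) - 1) : ℕ) : ℝ)) /
      Matrix.det (Matrix.of fun i j : Fin n =>
        ((2 ^ (i.1 + 1 + (j.1 + 1)) *
          Nat.doubleFactorial (2 * (i.1 + 1 + (j.1 + 1)) - 1) : ℕ) : ℝ)) =
      2 ^ n * (Nat.factorial n : ℝ) / (Nat.doubleFactorial (2 * n + 1) : ℝ) := by
  have hH : (Matrix.of fun i j : Fin (n + 1) =>
        ((2 ^ (i.1 + j.1) * Nat.doubleFactorial (2 * (i.1 + j.1) - 1) : ℕ) : ℝ))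
      = Matrix.of fun i j : Fin (n+1) => ((2 ^ (i.1 + j.1) * P 1 (i.1 + j.1) : ℕ) : ℝ) := by
    ext i j
    simp only [Matrix.of_apply]
    rw [← Pd]
  have hG : (Matrix.of fun i j : Fin n =>
        ((2 ^ (i.1 + 1 + (j.1 + 1)) *
          Nat.doubleFactorial (2 * (i.1 + 1 + (j.1 + 1)) - 1) : ℕ) : ℝ))
      = (12:ℝ) • Matrix.of fun i j : Fin n => ((2 ^ (i.1 + j.1) * P 5 (i.1 + j.1) : ℕ) : ℝ) := by
    ext i j
    simp only [Matrix.smul_apply, Matrix.of_apply, smul_eq_mul]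
    rw [← Pd (i.1+1+(j.1+1)), show i.1+1+(j.1+1) = (i.1+j.1)+2 by omega, P15 (i.1+j.1)]
    push_cast
    ring
  rw [hH, hG, detM 1 (n+1), Matrix.det_smul, detM 5 n, Fintype.card_fin,
    ← Nat.cast_prod, ← Nat.cast_prod]
  have hBpos : 0 < ∏ k ∈ Finset.range n, 8^k * Nat.factorial k * P 5 k := by
    apply Finset.prod_pos
    intro k _
    have := P_pos 5 k (by norm_num)
    have := Nat.factorial_pos k
    positivity
  have hdpos : 0 < Nat.doubleFactorial (2*n+1) := Nat.doubleFactorial_pos _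
  rw [div_eq_div_iff (by positivity) (by exact_mod_cast hdpos.ne')]
  rw [← P1 n]
  have h2 : (∏ k ∈ Finset.range (n+1), 8^k * Nat.factorial k * P 1 k) * P 1 (n+1)
      = 2^n * Nat.factorial n * (12^n * ∏ k ∈ Finset.range n, 8^k * Nat.factorial k * P 5 k) := by
    rw [AB n]; ring
  exact_mod_cast congrArg (Nat.cast : ℕ → ℝ) h2
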